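/- arXiv:2301.10097 — 2 statements merged into one kernel-verified Lean document; each statement's English description precedes it below -/
import Mathlib

section
/- Let m ∈ ℕ and let α₁, …, α_{m+1} ∈ ℝ satisfy α_{m+1} = (m + 1) − ∑_{i=1}^{m} αᵢ (equivalently ∑_{i=1}^{m+1} αᵢ = m + 1). Define G(θ) = ∏_{i=1}^{m+1} (αᵢ + (1 − αᵢ) cos θ). Then θ ↦ G(θ) − 1 is O(θ⁴) as θ → 0. -/
open Filter Asymptotics Finset
open scoped Topology

/-- With the compensation step `α_{m+1} = m + 1 − ∑_{i=1}^m αᵢ`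
(equivalently `∑ αᵢ = m + 1`), the total attenuation of the `m+1` successive
three-point filters is `1 + O(θ⁴)` as `θ → 0`. -/
theorem stmt7 (m : ℕ) (α : Fin (m + 1) → ℝ)
    (hα : ∑ i : Fin (m + 1), α i = (m + 1 : ℝ)) (G : ℝ → ℝ)
    (hG : ∀ θ : ℝ, G θ = ∏ i : Fin (m + 1), (α i + (1 - α i) * Real.cos θ)) :
    (fun θ : ℝ => G θ - 1) =O[𝓝 0] fun θ : ℝ => θ ^ 4 := by
  set c : Fin (m + 1) → ℝ := fun i => 1 - α i with hc
  have hcsum : ∑ i : Fin (m + 1), c i = 0 := by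
    simp only [hc, Finset.sum_sub_distrib, hα]
    simp
  set P : Polynomial ℝ := ∏ i : Fin (m + 1), (1 - Polynomial.C (c i) * Polynomial.X) with hP
  -- coefficients of P
  have hcoeff0 : P.coeff 0 = 1 := by
    rw [Polynomial.coeff_zero_eq_eval_zero, hP, Polynomial.eval_prod]
    simp
  have hdevalgen : ∀ s : Finset (Fin (m + 1)), Polynomial.eval 0
      (Polynomial.derivative (∏ i ∈ s, (1 - Polynomial.C (c i) * Polynomial.X)))
        = -∑ i ∈ s, c i := by
    intro s
    induction s using Finset.induction_on with
    | empty => simp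
    | insert _ _ hx ih =>
      rename_i a s'
      rw [Finset.prod_insert hx, Polynomial.derivative_mul, Polynomial.eval_add,
        Polynomial.eval_mul, Polynomial.eval_mul, ih, Finset.sum_insert hx]
      simp [Polynomial.eval_prod]
      ring
  have hcoeff1 : P.coeff 1 = 0 := by
    have h := Polynomial.coeff_derivative P 0
    have hd0 : (Polynomial.derivative P).coeff 0 = 0 := by
      rw [Polynomial.coeff_zero_eq_eval_zero, hP, hdevalgen, hcsum, neg_zero]
    rw [hd0] at h
    simpa using h.symm
  have hdvd : Polynomial.X ^ 2 ∣ (P - 1) := by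
    rw [Polynomial.X_pow_dvd_iff]
    intro d hd
    interval_cases d
    · simp [hcoeff0]
    · simp [hcoeff1, Polynomial.coeff_one]
  obtain ⟨Q, hQ⟩ := hdvd
  -- evaluation identity
  have hGQ : ∀ θ : ℝ, G θ - 1 =
      (1 - Real.cos θ) ^ 2 * Q.eval (1 - Real.cos θ) := by
    intro θ
    have h1 : G θ = P.eval (1 - Real.cos θ) := by
      rw [hG, hP, Polynomial.eval_prod]
      refine Finset.prod_congr rfl fun i _ => ?_
      simp [hc]
      ring
    have h2 := congrArg (Polynomial.eval (1 - Real.cos θ)) hQ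
    simp only [Polynomial.eval_sub, Polynomial.eval_one, Polynomial.eval_mul,
      Polynomial.eval_pow, Polynomial.eval_X] at h2
    rw [h1, h2]
  -- asymptotics
  have hcos : (fun θ : ℝ => 1 - Real.cos θ) =O[𝓝 0] fun θ : ℝ => θ ^ 2 := by
    refine IsBigO.of_bound (1 / 2) ?_
    refine Eventually.of_forall fun θ => ?_
    have hid : 1 - Real.cos θ = 2 * Real.sin (θ / 2) ^ 2 := by
      have := Real.cos_sq (θ / 2)
      have h2 : Real.sin (θ / 2) ^ 2 = 1 - Real.cos (θ / 2) ^ 2 := by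
        have := Real.sin_sq_add_cos_sq (θ / 2); linarith
      rw [h2, this]
      have : 2 * (θ / 2) = θ := by ring
      rw [this]; ring
    have hsin : Real.sin (θ / 2) ^ 2 ≤ (θ / 2) ^ 2 := by
      have h := Real.abs_sin_le_abs (x := θ / 2)
      calc Real.sin (θ / 2) ^ 2 = |Real.sin (θ / 2)| ^ 2 := (sq_abs _).symm
        _ ≤ |θ / 2| ^ 2 := by
            exact pow_le_pow_left₀ (abs_nonneg _) h 2
        _ = (θ / 2) ^ 2 := sq_abs _
    have h0 : 0 ≤ 1 - Real.cos θ := by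
      have := Real.cos_le_one θ; linarith
    rw [Real.norm_eq_abs, Real.norm_eq_abs, abs_of_nonneg h0]
    have : |θ ^ 2| = θ ^ 2 := abs_of_nonneg (sq_nonneg θ)
    rw [this]
    nlinarith [hsin]
  have hQb : (fun θ : ℝ => Q.eval (1 - Real.cos θ)) =O[𝓝 0]
      (fun _ : ℝ => (1 : ℝ)) := by
    have hcont : ContinuousAt (fun θ : ℝ => Q.eval (1 - Real.cos θ)) 0 :=
      (Q.continuous_aeval.comp (continuous_const.sub Real.continuous_cos)).continuousAt
    exact hcont.isBigO_one ℝ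
  have hmain : (fun θ : ℝ => (1 - Real.cos θ) ^ 2 * Q.eval (1 - Real.cos θ))
      =O[𝓝 0] fun θ : ℝ => (θ ^ 2) ^ 2 * 1 := (hcos.pow 2).mul hQb
  have hmain' : (fun θ : ℝ => G θ - 1) =O[𝓝 0] fun θ : ℝ => (θ ^ 2) ^ 2 * 1 :=
    hmain.congr_left fun θ => (hGQ θ).symm
  have heq : (fun θ : ℝ => (θ ^ 2) ^ 2 * 1) = fun θ : ℝ => θ ^ 4 :=
    funext fun θ => by ring
  rw [← heq]
  exact hmain'
end

section
/- Let E = EuclideanSpace ℝ (Fin 3), let S : E → ℝ be continuously differentiable, let T ∈ ℝ, let (x_j)_{j∈Fin J} ⊆ E be quadrature points with weights (w_j)_{j∈Fin J} ⊆ ℝ, and let (ω_k)_{k∈Fin K} ⊆ ℝ be particle weights. For particle positions X : Fin K → E define n_h(X, y) = ∑_{k'} ω_{k'} S(y − X_{k'}) and assume n_h(X, x_j) > 0 for all j at the point X under consideration. Define H_e(X) = T ∑_j w_j · n_h(X, x_j) · log(n_h(X, x_j)). Then H_e is differentiable in the position X_k of the k-th particle, and its gradient with respect to X_k is ∇_{X_k}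 H_e = −T ω_k ∑_j w_j (1 + log(n_h(X, x_j))) ∇S(x_j − X_k). -/
open InnerProductSpace


/-- Gradient of the discrete electron thermal energy
`H_e(X) = T ∑_j w_j n_h(X, x_j) log n_h(X, x_j)`, with
`n_h(X, y) = ∑_{k'} ω_{k'} S(y − X_{k'})`, with respect to the position `X_k`
of the `k`-th particle:
`∇_{X_k} H_e = −T ω_k ∑_j w_j (1 + log n_h(X, x_j)) ∇S(x_j − X_k)`. -/
theorem stmt12 (S : EuclideanSpace ℝ (Fin 3) → ℝ) (hS : ContDiff ℝ 1 S)
    (T : ℝ) (J K : ℕ)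
    (xq : Fin J → EuclideanSpace ℝ (Fin 3)) (w : Fin J → ℝ) (ω : Fin K → ℝ)
    (nh : (Fin K → EuclideanSpace ℝ (Fin 3)) → EuclideanSpace ℝ (Fin 3) → ℝ)
    (hnh : ∀ X y, nh X y = ∑ k' : Fin K, ω k' * S (y - X k'))
    (He : (Fin K → EuclideanSpace ℝ (Fin 3)) → ℝ)
    (hHe : ∀ X, He X = T * ∑ j : Fin J, w j * (nh X (xq j) * Real.log (nh X (xq j))))
    (X : Fin K → EuclideanSpace ℝ (Fin 3)) (k : Fin K)
    (hpos : ∀ j : Fin J, 0 < nh X (xq j)) :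
    DifferentiableAt ℝ (fun z => He (Function.update X k z)) (X k) ∧
      gradient (fun z => He (Function.update X k z)) (X k)
        = -(T * ω k) • ∑ j : Fin J,
            (w j * (1 + Real.log (nh X (xq j)))) • gradient S (xq j - X k) := by
  classical
  -- per-j density as a function of z
  set nv : Fin J → EuclideanSpace ℝ (Fin 3) → ℝ := fun j z => ω k * S (xq j - z) +
      ∑ k' ∈ Finset.univ.erase k, ω k' * S (xq j - X k') with hnv
  have hnv_eq : ∀ j z, nh (Function.update X k z) (xq j) = nv j z := by
    intro j z
    rw [hnh, ← Finset.add_sum_erase _ _ (Finset.mem_univ k)]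
    simp only [hnv, Function.update_self]
    congr 1
    refine Finset.sum_congr rfl fun i hi => ?_
    rw [Function.update_of_ne (Finset.ne_of_mem_erase hi)]
  have hnvX : ∀ j, nv j (X k) = nh X (xq j) := by
    intro j
    rw [← hnv_eq j (X k), Function.update_eq_self]
  -- derivative of nv j
  have hDnv : ∀ j, HasFDerivAt (nv j)
      (ω k • ((fderiv ℝ S (xq j - X k)).comp
        ((0 : EuclideanSpace ℝ (Fin 3) →L[ℝ] EuclideanSpace ℝ (Fin 3)) - ContinuousLinearMap.id ℝ (EuclideanSpace ℝ (Fin 3))))) (X k) := by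
    intro j
    have hA : HasFDerivAt (fun z : EuclideanSpace ℝ (Fin 3) => xq j - z)
        ((0 : EuclideanSpace ℝ (Fin 3) →L[ℝ] EuclideanSpace ℝ (Fin 3)) - ContinuousLinearMap.id ℝ (EuclideanSpace ℝ (Fin 3))) (X k) :=
      (hasFDerivAt_const (xq j) (X k)).sub (hasFDerivAt_id (X k))
    have hS' : HasFDerivAt S (fderiv ℝ S (xq j - X k)) (xq j - X k) :=
      (hS.differentiable one_ne_zero (xq j - X k)).hasFDerivAt
    exact ((hS'.comp (X k) hA).const_smul (ω k)).add_const _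
  -- derivative of each term
  set D : Fin J → (EuclideanSpace ℝ (Fin 3) →L[ℝ] ℝ) := fun j =>
    (w j * (Real.log (nh X (xq j)) + 1) * ω k) •
      ((fderiv ℝ S (xq j - X k)).comp ((0 : EuclideanSpace ℝ (Fin 3) →L[ℝ] EuclideanSpace ℝ (Fin 3)) - ContinuousLinearMap.id ℝ (EuclideanSpace ℝ (Fin 3))))
    with hD
  have hterm : ∀ j, HasFDerivAt (fun z => w j * (nv j z * Real.log (nv j z))) (D j) (X k) := by
    intro j
    have hlog : HasDerivAt (fun t : ℝ => t * Real.log t)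
        (Real.log (nv j (X k)) + 1) (nv j (X k)) :=
      Real.hasDerivAt_mul_log (by rw [hnvX]; exact (hpos j).ne')
    have := (hlog.comp_hasFDerivAt (X k) (hDnv j)).const_mul (w j)
    simpa [hD, hnvX j, smul_smul, mul_assoc, mul_comm, mul_left_comm] using this
  have hg : HasFDerivAt (fun z => He (Function.update X k z)) (T • ∑ j, D j) (X k) := by
    have hsum : HasFDerivAt (fun z => ∑ j, w j * (nv j z * Real.log (nv j z)))
        (∑ j, D j) (X k) := HasFDerivAt.fun_sum (fun j _ => hterm j)
    have := hsum.const_mul T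
    have heq : (fun z => He (Function.update X k z)) =
        fun z => T * ∑ j, w j * (nv j z * Real.log (nv j z)) := by
      funext z
      rw [hHe]
      congr 1
      exact Finset.sum_congr rfl fun j _ => by rw [hnv_eq]
    rw [heq]
    simpa [smul_eq_mul] using this
  refine ⟨hg.differentiableAt, ?_⟩
  have hgrad : gradient (fun z => He (Function.update X k z)) (X k)
      = (toDual ℝ (EuclideanSpace ℝ (Fin 3))).symm (T • ∑ j, D j) := by
    rw [gradient, hg.fderiv]
  rw [hgrad]
  have hcomp : ∀ j, (fderiv ℝ S (xq j - X k)).comp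
      ((0 : EuclideanSpace ℝ (Fin 3) →L[ℝ] EuclideanSpace ℝ (Fin 3)) - ContinuousLinearMap.id ℝ (EuclideanSpace ℝ (Fin 3))) = -(fderiv ℝ S (xq j - X k)) := by
    intro j
    ext v
    simp
  have hgradS : ∀ j, gradient S (xq j - X k) = (toDual ℝ (EuclideanSpace ℝ (Fin 3))).symm (fderiv ℝ S (xq j - X k)) :=
    fun j => rfl
  simp only [hD, hcomp, map_smul, map_sum, map_neg, smul_neg, Finset.smul_sum]
  refine Finset.sum_congr rfl fun j _ => ?_
  rw [hgradS, smul_smul, smul_smul, ← neg_smul]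
  congr 1
  ring
end
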